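/- For 0 < q < 1 and β ∈ ℝ, set φ₁ = arg(cos β + i(1−2q) sin β) (the two-argument arctangent arctan2((1−2q) sin β, cos β)) and φ₂ = arcsin(2√(q(1−q)) sin β). Then the matrix exponential of the single-qubit warm-start mixer factorizes exactly as exp(−i β M(q)) = [[e^{−iφ₁} cos φ₂, i sin φ₂], [i sin φ₂, e^{iφ₁} cos φ₂]]; equivalently, the two-qubit block evolution exp(−i β · blockdiag(0, M(q), 0)) equals the product of a Z-rotation by φ₁ on the first qubit, an XY-interaction realizing blockdiag(1, [[cos φ₂, i sin φ₂],[i sin φ₂, cos φ₂]], 1), and a Z-rotation by −φ₁ on the second qubit. -/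

import Mathlib

open Matrix Complex Kronecker

/-- The single-qubit warm-start mixer `M(q)`, as a complex 2×2 matrix. -/
noncomputable def wsMixer (q : ℝ) : Matrix (Fin 2) (Fin 2) ℂ :=
  !![(1 - 2*q : ℝ), (-2 * Real.sqrt (q * (1 - q)) : ℝ);
     (-2 * Real.sqrt (q * (1 - q)) : ℝ), (2*q - 1 : ℝ)]

/-- Two-qubit basis states are indexed by `Fin 2 × Fin 2`, ordered
`|00⟩, |01⟩, |10⟩, |11⟩`.  `blockdiag a B d` acts as the scalar `a` on `|00⟩`,
as the 2×2 matrix `B` on `span{|01⟩, |10⟩}`, and as the scalar `d` on `|11⟩`. -/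
def blockdiag (a : ℂ) (B : Matrix (Fin 2) (Fin 2) ℂ) (d : ℂ) :
    Matrix (Fin 2 × Fin 2) (Fin 2 × Fin 2) ℂ := fun p r =>
  if p = (0, 0) ∧ r = (0, 0) then a
  else if p = (1, 1) ∧ r = (1, 1) then d
  else if (p = (0, 1) ∨ p = (1, 0)) ∧ (r = (0, 1) ∨ r = (1, 0)) then B p.1 r.1
  else 0

/-- The single-qubit Z-rotation `R_Z(θ) = diag(e^{-iθ/2}, e^{iθ/2})`. -/
noncomputable def RZ (θ : ℝ) : Matrix (Fin 2) (Fin 2) ℂ :=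
  !![Complex.exp (-(Complex.I * θ) / 2), 0; 0, Complex.exp (Complex.I * θ / 2)]

/-! ### Auxiliary material -/

section Aux

lemma ws_smul2 (x a b c d : ℂ) :
    x • (!![a,b;c,d] : Matrix (Fin 2) (Fin 2) ℂ) = !![x*a,x*b;x*c,x*d] := by
  ext i j; fin_cases i <;> fin_cases j <;> simp

/-- Eigenvector matrix for `!![C, S; S, -C]`. -/
noncomputable def wsU (C S : ℂ) : Matrix (Fin 2) (Fin 2) ℂ := !![1+C, -S; S, 1+C]

/-- Inverse of the eigenvector matrix. -/
noncomputable def wsUi (C S : ℂ) : Matrix (Fin 2) (Fin 2) ℂ :=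
  !![(2*(1+C))⁻¹*(1+C), (2*(1+C))⁻¹*S; -((2*(1+C))⁻¹*S), (2*(1+C))⁻¹*(1+C)]

lemma wsUUi (C S : ℂ) (hS2 : S^2 = 1 - C^2) (h1C : 1 + C ≠ 0) : wsU C S * wsUi C S = 1 := by
  have h2 : (2*(1+C)) ≠ 0 := by simp [h1C]
  rw [wsU, wsUi, Matrix.mul_fin_two]
  ext i j
  fin_cases i <;> fin_cases j <;>
    · simp [Matrix.one_apply]
      field_simp
      first
      | ring1
      | (ring_nf; rw [hS2]; ring1)
      | (ring_nf; rw [hS2]; ring_nf)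

lemma wsUiU (C S : ℂ) (hS2 : S^2 = 1 - C^2) (h1C : 1 + C ≠ 0) : wsUi C S * wsU C S = 1 := by
  have h2 : (2*(1+C)) ≠ 0 := by simp [h1C]
  rw [wsU, wsUi, Matrix.mul_fin_two]
  ext i j
  fin_cases i <;> fin_cases j <;>
    · simp [Matrix.one_apply]
      field_simp
      first
      | ring1
      | (ring_nf; rw [hS2]; ring1)
      | (ring_nf; rw [hS2]; ring_nf)

lemma wsA (C S : ℂ) (hS2 : S^2 = 1 - C^2) (h1C : 1 + C ≠ 0) (β : ℝ) :
    (-(Complex.I * β)) • (!![C, S; S, -C] : Matrix (Fin 2) (Fin 2) ℂ)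
      = wsU C S * !![-(Complex.I * β), 0; 0, Complex.I * β] * wsUi C S := by
  have hAU : (-(Complex.I * β)) • (!![C, S; S, -C] : Matrix (Fin 2) (Fin 2) ℂ) * wsU C S
      = wsU C S * !![-(Complex.I * β), 0; 0, Complex.I * β] := by
    rw [wsU, ws_smul2, Matrix.mul_fin_two, Matrix.mul_fin_two]
    ext i j
    fin_cases i <;> fin_cases j <;>
      · simp
        first
        | ring1
        | (ring_nf; rw [hS2]; ring1)
        | (ring_nf; rw [hS2]; ring_nf)
  calc (-(Complex.I * β)) • (!![C, S; S, -C] : Matrix (Fin 2) (Fin 2) ℂ)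
      = (-(Complex.I * β)) • (!![C, S; S, -C] : Matrix (Fin 2) (Fin 2) ℂ)
          * (wsU C S * wsUi C S) := by rw [wsUUi C S hS2 h1C, mul_one]
    _ = ((-(Complex.I * β)) • (!![C, S; S, -C] : Matrix (Fin 2) (Fin 2) ℂ) * wsU C S)
          * wsUi C S := by rw [mul_assoc]
    _ = _ := by rw [hAU]

lemma ws_expD (β : ℝ) :
    NormedSpace.exp (!![-(Complex.I * β), 0; 0, Complex.I * β]
      : Matrix (Fin 2) (Fin 2) ℂ)
      = !![Complex.exp (-(Complex.I * β)), 0; 0, Complex.exp (Complex.I * β)] := by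
  have hdiag : (!![-(Complex.I * β), 0; 0, Complex.I * β] : Matrix (Fin 2) (Fin 2) ℂ)
      = Matrix.diagonal ![-(Complex.I * β), Complex.I * β] := by
    ext i j; fin_cases i <;> fin_cases j <;> simp
  rw [hdiag, Matrix.exp_diagonal]
  have h : NormedSpace.exp (![-(Complex.I * (β:ℂ)), Complex.I * β] : Fin 2 → ℂ)
      = ![Complex.exp (-(Complex.I * β)), Complex.exp (Complex.I * β)] := by
    funext i
    rw [Pi.coe_exp, ← Complex.exp_eq_exp_ℂ]
    fin_cases i <;> rfl
  rw [h]
  ext i j; fin_cases i <;> fin_cases j <;> simp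

lemma wsUEU (C S : ℂ) (hS2 : S^2 = 1 - C^2) (h1C : 1 + C ≠ 0) (β : ℝ) :
    wsU C S * !![Complex.exp (-(Complex.I * β)), 0; 0, Complex.exp (Complex.I * β)] * wsUi C S
      = !![(Real.cos β : ℂ) - Complex.I*C*Real.sin β, -(Complex.I*S*Real.sin β);
           -(Complex.I*S*Real.sin β), (Real.cos β : ℂ) + Complex.I*C*Real.sin β] := by
  have e1 : Complex.exp (-(Complex.I * β)) = (Real.cos β : ℂ) - Complex.I * Real.sin β := by
    rw [show (-(Complex.I*(β:ℂ))) = ((-β : ℝ) : ℂ) * Complex.I by push_cast; ring,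
      Complex.exp_mul_I]
    push_cast
    rw [Complex.cos_neg, Complex.sin_neg, ← Complex.ofReal_cos, ← Complex.ofReal_sin]
    ring
  have e2 : Complex.exp (Complex.I * β) = (Real.cos β : ℂ) + Complex.I * Real.sin β := by
    rw [show (Complex.I*(β:ℂ)) = ((β : ℝ) : ℂ) * Complex.I by push_cast; ring,
      Complex.exp_mul_I, ← Complex.ofReal_cos, ← Complex.ofReal_sin]
    ring
  have hTU : wsU C S * !![Complex.exp (-(Complex.I * β)), 0; 0, Complex.exp (Complex.I * β)]
      = !![(Real.cos β : ℂ) - Complex.I*C*Real.sin β, -(Complex.I*S*Real.sin β);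
           -(Complex.I*S*Real.sin β), (Real.cos β : ℂ) + Complex.I*C*Real.sin β] * wsU C S := by
    rw [wsU, e1, e2, Matrix.mul_fin_two, Matrix.mul_fin_two]
    ext i j
    fin_cases i <;> fin_cases j <;>
      · simp
        push_cast
        first
        | ring1
        | (ring_nf; rw [hS2]; ring1)
        | (ring_nf; rw [hS2]; ring_nf)
  rw [hTU, mul_assoc, wsUUi C S hS2 h1C, mul_one]

/-- The exact single-qubit evolution, in cos/sin form. -/
lemma ws_exp2 (C S : ℂ) (hS2 : S^2 = 1 - C^2) (h1C : 1 + C ≠ 0) (β : ℝ) :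
    NormedSpace.exp ((-(Complex.I * β)) • (!![C, S; S, -C] : Matrix (Fin 2) (Fin 2) ℂ))
      = !![(Real.cos β : ℂ) - Complex.I*C*Real.sin β, -(Complex.I*S*Real.sin β);
           -(Complex.I*S*Real.sin β), (Real.cos β : ℂ) + Complex.I*C*Real.sin β] := by
  have hUnit : IsUnit (wsU C S) :=
    ⟨⟨wsU C S, wsUi C S, wsUUi C S hS2 h1C, wsUiU C S hS2 h1C⟩, rfl⟩
  have hUinvEq : (wsU C S)⁻¹ = wsUi C S := Matrix.inv_eq_right_inv (wsUUi C S hS2 h1C)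
  rw [wsA C S hS2 h1C β, ← hUinvEq, Matrix.exp_conj (wsU C S) _ hUnit, hUinvEq,
    ws_expD β, wsUEU C S hS2 h1C β]

lemma bd_mul (a a' d d' : ℂ) (B B' : Matrix (Fin 2) (Fin 2) ℂ) :
    blockdiag a B d * blockdiag a' B' d' = blockdiag (a*a') (B*B') (d*d') := by
  ext ⟨i,j⟩ ⟨k,l⟩
  fin_cases i <;> fin_cases j <;> fin_cases k <;> fin_cases l <;>
    simp [blockdiag, Matrix.mul_apply, Fintype.sum_prod_type, Fin.sum_univ_two, Prod.ext_iff]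

lemma bd_one : blockdiag 1 1 1 = 1 := by
  ext ⟨i,j⟩ ⟨k,l⟩
  fin_cases i <;> fin_cases j <;> fin_cases k <;> fin_cases l <;>
    simp [blockdiag, Matrix.one_apply, Prod.ext_iff]

lemma bd_smul (x : ℂ) (B : Matrix (Fin 2) (Fin 2) ℂ) :
    x • blockdiag 0 B 0 = blockdiag 0 (x • B) 0 := by
  ext p r
  simp only [Matrix.smul_apply, blockdiag, smul_eq_mul]
  split_ifs <;> simp

lemma bd_exp_diag (x y : ℂ) :
    NormedSpace.exp (blockdiag 0 (!![x, 0; 0, y]) 0)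
      = blockdiag 1 (!![Complex.exp x, 0; 0, Complex.exp y]) 1 := by
  have hdiag : blockdiag 0 (!![x, 0; 0, y]) 0
      = Matrix.diagonal (fun p : Fin 2 × Fin 2 =>
          if p = (0,1) then x else if p = (1,0) then y else 0) := by
    ext ⟨i,j⟩ ⟨k,l⟩
    fin_cases i <;> fin_cases j <;> fin_cases k <;> fin_cases l <;>
      simp [blockdiag, Matrix.diagonal, Prod.ext_iff]
  rw [hdiag, Matrix.exp_diagonal]
  have h : NormedSpace.exp (fun p : Fin 2 × Fin 2 =>
        if p = (0,1) then x else if p = (1,0) then y else 0)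
      = fun p : Fin 2 × Fin 2 =>
          if p = (0,1) then Complex.exp x else if p = (1,0) then Complex.exp y else 1 := by
    funext p
    rw [Pi.coe_exp, ← Complex.exp_eq_exp_ℂ]
    obtain ⟨i, j⟩ := p
    fin_cases i <;> fin_cases j <;> simp [Prod.ext_iff, Complex.exp_zero]
  rw [h]
  ext ⟨i,j⟩ ⟨k,l⟩
  fin_cases i <;> fin_cases j <;> fin_cases k <;> fin_cases l <;>
    simp [blockdiag, Matrix.diagonal, Prod.ext_iff]

lemma kron1 (θ : ℝ) : RZ θ ⊗ₖ (1 : Matrix (Fin 2) (Fin 2) ℂ)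
    = blockdiag (Complex.exp (-(Complex.I * θ) / 2))
        (!![Complex.exp (-(Complex.I * θ) / 2), 0; 0, Complex.exp (Complex.I * θ / 2)])
        (Complex.exp (Complex.I * θ / 2)) := by
  ext ⟨i,j⟩ ⟨k,l⟩
  fin_cases i <;> fin_cases j <;> fin_cases k <;> fin_cases l <;>
    simp [blockdiag, RZ, Matrix.one_apply, Prod.ext_iff, Matrix.kroneckerMap_apply]

lemma kron2 (θ : ℝ) : (1 : Matrix (Fin 2) (Fin 2) ℂ) ⊗ₖ RZ (-θ)
    = blockdiag (Complex.exp (Complex.I * θ / 2))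
        (!![Complex.exp (-(Complex.I * θ) / 2), 0; 0, Complex.exp (Complex.I * θ / 2)])
        (Complex.exp (-(Complex.I * θ) / 2)) := by
  have h1 : Complex.exp (-(Complex.I * (-θ:ℝ)) / 2) = Complex.exp (Complex.I * θ / 2) := by
    congr 1; push_cast; ring
  have h2 : Complex.exp (Complex.I * (-θ:ℝ) / 2) = Complex.exp (-(Complex.I * θ) / 2) := by
    congr 1; push_cast; ring
  ext ⟨i,j⟩ ⟨k,l⟩
  fin_cases i <;> fin_cases j <;> fin_cases k <;> fin_cases l <;>
    simp [blockdiag, RZ, Matrix.one_apply, Prod.ext_iff, Matrix.kroneckerMap_apply, h1, h2]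

/-- The exact two-qubit evolution, in cos/sin form. -/
lemma ws_exp4 (C S : ℂ) (hS2 : S^2 = 1 - C^2) (h1C : 1 + C ≠ 0) (β : ℝ) :
    NormedSpace.exp ((-(Complex.I * β)) •
        blockdiag 0 (!![C, S; S, -C] : Matrix (Fin 2) (Fin 2) ℂ) 0)
      = blockdiag 1
          (!![(Real.cos β : ℂ) - Complex.I*C*Real.sin β, -(Complex.I*S*Real.sin β);
              -(Complex.I*S*Real.sin β), (Real.cos β : ℂ) + Complex.I*C*Real.sin β]) 1 := by
  have hVVi : blockdiag 1 (wsU C S) 1 * blockdiag 1 (wsUi C S) 1 = 1 := by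
    rw [bd_mul, wsUUi C S hS2 h1C, mul_one, bd_one]
  have hViV : blockdiag 1 (wsUi C S) 1 * blockdiag 1 (wsU C S) 1 = 1 := by
    rw [bd_mul, wsUiU C S hS2 h1C, mul_one, bd_one]
  have hVunit : IsUnit (blockdiag 1 (wsU C S) 1) :=
    ⟨⟨blockdiag 1 (wsU C S) 1, blockdiag 1 (wsUi C S) 1, hVVi, hViV⟩, rfl⟩
  have hVinv : (blockdiag 1 (wsU C S) 1)⁻¹ = blockdiag 1 (wsUi C S) 1 :=
    Matrix.inv_eq_right_inv hVVi
  have hdec : (-(Complex.I * β)) •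
      blockdiag 0 (!![C, S; S, -C] : Matrix (Fin 2) (Fin 2) ℂ) 0
      = blockdiag 1 (wsU C S) 1
        * blockdiag 0 (!![-(Complex.I * β), 0; 0, Complex.I * β]) 0
        * blockdiag 1 (wsUi C S) 1 := by
    rw [bd_mul, bd_mul, bd_smul, wsA C S hS2 h1C β]
    norm_num
  rw [hdec, ← hVinv, Matrix.exp_conj _ _ hVunit, hVinv, bd_exp_diag, bd_mul, bd_mul,
    wsUEU C S hS2 h1C β]
  norm_num

end Aux

/-- With `φ₁ = arctan2((1-2q) sin β, cos β)` (the argument of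
`cos β + i(1-2q) sin β`) and `φ₂ = arcsin(2√(q(1-q)) sin β)`, the evolution of
the warm-start mixer factorizes exactly:
`exp(-iβM(q)) = [[e^{-iφ₁} cos φ₂, i sin φ₂], [i sin φ₂, e^{iφ₁} cos φ₂]]`,
and on two qubits, `exp(-iβ·blockdiag(0, M(q), 0))` is the product of a
Z-rotation by `φ₁` on the first qubit, the XY-interaction
`blockdiag(1, [[cos φ₂, i sin φ₂], [i sin φ₂, cos φ₂]], 1)`, and a Z-rotation
by `-φ₁` on the second qubit. -/
theorem statement11 (q : ℝ) (hq0 : 0 < q) (hq1 : q < 1) (β : ℝ)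
    (φ₁ φ₂ : ℝ)
    (hφ₁ : φ₁ = Complex.arg ((Real.cos β : ℂ) + Complex.I * ((1 - 2*q) * Real.sin β : ℝ)))
    (hφ₂ : φ₂ = Real.arcsin (2 * Real.sqrt (q * (1 - q)) * Real.sin β)) :
    NormedSpace.exp ((-(Complex.I * β)) • wsMixer q)
      = !![Complex.exp (-(Complex.I * φ₁)) * Real.cos φ₂, Complex.I * Real.sin φ₂;
           Complex.I * Real.sin φ₂, Complex.exp (Complex.I * φ₁) * Real.cos φ₂] ∧
    NormedSpace.exp ((-(Complex.I * β)) • blockdiag 0 (wsMixer q) 0)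
      = (RZ φ₁ ⊗ₖ (1 : Matrix (Fin 2) (Fin 2) ℂ))
        * blockdiag 1 (!![(Real.cos φ₂ : ℂ), Complex.I * Real.sin φ₂;
                          Complex.I * Real.sin φ₂, (Real.cos φ₂ : ℂ)]) 1
        * ((1 : Matrix (Fin 2) (Fin 2) ℂ) ⊗ₖ RZ (-φ₁)) := by
  obtain ⟨C, hC⟩ : ∃ C : ℂ, C = ((1 - 2*q : ℝ) : ℂ) := ⟨_, rfl⟩
  obtain ⟨S, hS⟩ : ∃ S : ℂ, S = ((-2 * Real.sqrt (q * (1 - q)) : ℝ) : ℂ) := ⟨_, rfl⟩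
  have hq' : (0:ℝ) ≤ q * (1 - q) := by nlinarith
  have hsq : (Real.sqrt (q * (1 - q)))^2 = q * (1 - q) := Real.sq_sqrt hq'
  have hS2 : S^2 = 1 - C^2 := by
    rw [hC, hS]
    have h : (((Real.sqrt (q * (1 - q)) : ℝ)) : ℂ)^2 = ((q * (1 - q) : ℝ) : ℂ) := by
      rw [← Complex.ofReal_pow, hsq]
    push_cast
    push_cast at h
    linear_combination (4:ℂ) * h
  have h1C : 1 + C ≠ 0 := by
    rw [hC, show (1:ℂ) + ((1 - 2*q : ℝ) : ℂ) = ((2 - 2*q : ℝ) : ℂ) by push_cast; ring]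
    exact_mod_cast Complex.ofReal_ne_zero.mpr (by nlinarith)
  have hM : wsMixer q = !![C, S; S, -C] := by
    rw [hC, hS, wsMixer]
    ext i j
    fin_cases i <;> fin_cases j <;> simp <;> push_cast <;> ring
  -- the sine of φ₂
  have hxx : (2 * Real.sqrt (q * (1 - q)) * Real.sin β)^2 ≤ 1 := by
    nlinarith [Real.sin_sq_add_cos_sq β, Real.sin_le_one β, Real.neg_one_le_sin β,
      sq_nonneg (Real.cos β), sq_nonneg (2*q - 1), sq_nonneg (Real.sin β)]
  have hsin2 : Real.sin φ₂ = 2 * Real.sqrt (q * (1 - q)) * Real.sin β := by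
    rw [hφ₂]
    exact Real.sin_arcsin (by nlinarith) (by nlinarith)
  have hcos2 : Real.cos φ₂ = Real.sqrt (1 - (2 * Real.sqrt (q * (1 - q)) * Real.sin β)^2) := by
    rw [hφ₂, Real.cos_arcsin]
  -- the phase φ₁
  have habs : ‖((Real.cos β : ℂ) + Complex.I * ((1 - 2*q) * Real.sin β : ℝ))‖
      = Real.cos φ₂ := by
    rw [hcos2, Complex.norm_def, Complex.normSq_apply]
    have hre : ((Real.cos β : ℂ) + Complex.I * ((1 - 2*q) * Real.sin β : ℝ)).re
        = Real.cos β := by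
      simp only [Complex.add_re, Complex.ofReal_re, Complex.mul_re, Complex.I_re,
        Complex.I_im, Complex.ofReal_im, Complex.ofReal_re]
      ring
    have him : ((Real.cos β : ℂ) + Complex.I * ((1 - 2*q) * Real.sin β : ℝ)).im
        = (1 - 2*q) * Real.sin β := by
      simp only [Complex.add_im, Complex.ofReal_im, Complex.mul_im, Complex.I_re,
        Complex.I_im, Complex.ofReal_re]
      ring
    rw [hre, him]
    congr 1
    nlinarith [Real.sin_sq_add_cos_sq β]
  have hz : Complex.exp (Complex.I * φ₁) * (Real.cos φ₂ : ℂ)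
      = (Real.cos β : ℂ) + Complex.I * ((1 - 2*q) * Real.sin β : ℝ) := by
    calc Complex.exp (Complex.I * φ₁) * (Real.cos φ₂ : ℂ)
        = ((‖((Real.cos β : ℂ) + Complex.I * ((1 - 2*q) * Real.sin β : ℝ))‖ : ℝ) : ℂ)
            * Complex.exp (((φ₁ : ℝ) : ℂ) * Complex.I) := by
          rw [habs, mul_comm Complex.I ((φ₁ : ℝ) : ℂ)]; ring
      _ = _ := by rw [hφ₁]; exact Complex.norm_mul_exp_arg_mul_I _
  have hzc : Complex.exp (-(Complex.I * φ₁)) * (Real.cos φ₂ : ℂ)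
      = (Real.cos β : ℂ) - Complex.I * ((1 - 2*q) * Real.sin β : ℝ) := by
    have h2 : Complex.exp (-(Complex.I * (φ₁:ℝ)))
        = (starRingEnd ℂ) (Complex.exp (Complex.I * (φ₁:ℝ))) := by
      rw [← Complex.exp_conj]
      congr 1
      simp [Complex.conj_I]
    rw [h2, show ((Real.cos φ₂ : ℝ) : ℂ) = (starRingEnd ℂ) ((Real.cos φ₂ : ℝ) : ℂ) from
      (Complex.conj_ofReal _).symm, ← _root_.map_mul, hz, map_add, _root_.map_mul,
      Complex.conj_ofReal, Complex.conj_ofReal, Complex.conj_I]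
    ring
  -- entrywise identities
  have E00 : (Real.cos β : ℂ) - Complex.I*C*Real.sin β
      = Complex.exp (-(Complex.I * φ₁)) * (Real.cos φ₂ : ℂ) := by
    rw [hzc, hC]; push_cast; ring
  have E11 : (Real.cos β : ℂ) + Complex.I*C*Real.sin β
      = Complex.exp (Complex.I * φ₁) * (Real.cos φ₂ : ℂ) := by
    rw [hz, hC]; push_cast; ring
  have E01 : -(Complex.I*S*(Real.sin β : ℂ)) = Complex.I * (Real.sin φ₂ : ℂ) := by
    rw [hS, hsin2]; push_cast; ring
  constructor
  · rw [hM, ws_exp2 C S hS2 h1C β, E00, E01, E11]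
  · rw [hM, ws_exp4 C S hS2 h1C β, E00, E01, E11, kron1 φ₁, kron2 φ₁, bd_mul, bd_mul]
    -- scalar phase facts
    have hab : Complex.exp (-(Complex.I * (φ₁:ℝ)) / 2) * Complex.exp (Complex.I * (φ₁:ℝ) / 2)
        = 1 := by
      rw [← Complex.exp_add, show -(Complex.I * ((φ₁:ℝ):ℂ)) / 2 + Complex.I * ((φ₁:ℝ):ℂ) / 2
        = 0 by ring, Complex.exp_zero]
    have hba : Complex.exp (Complex.I * (φ₁:ℝ) / 2) * Complex.exp (-(Complex.I * (φ₁:ℝ)) / 2)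
        = 1 := by rw [mul_comm]; exact hab
    have haa : Complex.exp (-(Complex.I * (φ₁:ℝ)) / 2) * Complex.exp (-(Complex.I * (φ₁:ℝ)) / 2)
        = Complex.exp (-(Complex.I * (φ₁:ℝ))) := by
      rw [← Complex.exp_add]; congr 1; ring
    have hbb : Complex.exp (Complex.I * (φ₁:ℝ) / 2) * Complex.exp (Complex.I * (φ₁:ℝ) / 2)
        = Complex.exp (Complex.I * (φ₁:ℝ)) := by
      rw [← Complex.exp_add]; congr 1; ring
    have hmid : !![Complex.exp (-(Complex.I * (φ₁:ℝ)) / 2), 0; 0,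
          Complex.exp (Complex.I * (φ₁:ℝ) / 2)]
        * !![(Real.cos φ₂ : ℂ), Complex.I * Real.sin φ₂;
             Complex.I * Real.sin φ₂, (Real.cos φ₂ : ℂ)]
        * !![Complex.exp (-(Complex.I * (φ₁:ℝ)) / 2), 0; 0,
             Complex.exp (Complex.I * (φ₁:ℝ) / 2)]
        = !![Complex.exp (-(Complex.I * φ₁)) * (Real.cos φ₂:ℂ), Complex.I * Real.sin φ₂;
             Complex.I * Real.sin φ₂, Complex.exp (Complex.I * φ₁) * (Real.cos φ₂:ℂ)] := by
      rw [Matrix.mul_fin_two, Matrix.mul_fin_two]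
      ext i j
      fin_cases i <;> fin_cases j <;>
        · simp
          push_cast
          first
          | ring1
          | linear_combination (Complex.cos ((φ₂:ℝ):ℂ)) * haa
          | linear_combination (Complex.cos ((φ₂:ℝ):ℂ)) * hbb
          | linear_combination (Complex.I * Complex.sin ((φ₂:ℝ):ℂ)) * hab
          | linear_combination (Complex.I * Complex.sin ((φ₂:ℝ):ℂ)) * hba
    rw [hmid, mul_one, hab, mul_one, hba]
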